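/- Suppose the graph G = (V, E) is connected, Q ∈ ℝ^{|E|×|V|} is its oriented incidence matrix, and T = {τ_1, …, τ_d} is a (d, α, β, r, R) row covering of Q. Then the block gossip method on G with blocks determined by T converges at least linearly in expectation: E‖c_k − c*‖² ≤ (1 − r·α(G)/(β d))^k ‖c − c*‖², where c is the initial vector of node values, c* = mean(c)·1, and α(G) is the algebraic connectivity of G. -/

import Mathlib

open Matrix

noncomputable section

open Classical in

/-- The Moore–Penrose pseudoinverse of a real matrix, defined via the four Penrose
conditions (which always admit a unique solution). -/
def mpinv {m n : Type*} [Fintype m] [Fintype n] (A : Matrix m n ℝ) : Matrix n m ℝ :=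
  if h : ∃ B : Matrix n m ℝ,
      A * B * A = A ∧ B * A * B = B ∧ (A * B)ᵀ = A * B ∧ (B * A)ᵀ = B * A
  then h.choose else 0

/-- Smallest nonzero eigenvalue of a square real matrix. -/
def lambdaMinPos {k : Type*} [Fintype k] [DecidableEq k] (M : Matrix k k ℝ) : ℝ :=
  sInf {μ : ℝ | μ ≠ 0 ∧ μ ∈ spectrum ℝ M}

/-- Largest eigenvalue of a square real matrix. -/
def lambdaMax {k : Type*} [Fintype k] [DecidableEq k] (M : Matrix k k ℝ) : ℝ :=
  sSup (spectrum ℝ M)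

/-- Squared Euclidean norm of a vector. -/
def sqNorm {k : Type*} [Fintype k] (v : k → ℝ) : ℝ := ∑ i, (v i) ^ 2

/-- The row submatrix of `A` with rows indexed by the subset `τ`. -/
def rowSub {ι κ : Type*} (A : Matrix ι κ ℝ) (τ : Finset ι) : Matrix τ κ ℝ :=
  Matrix.of fun i j => A i.1 j

/-- `T = (τ_1, …, τ_d)` is a `(d, a, β, r, R)` row covering of `A`:
the blocks cover all row indices, `a` lower-bounds the smallest nonzero eigenvalue and `β`
upper-bounds the largest eigenvalue of each `A_τ A_τᵀ`, and `r` (resp. `R`) is the minimum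
(resp. maximum) number of blocks containing any single row. -/
structure IsRowCovering {ι κ : Type*} [Fintype ι] [DecidableEq ι] [Fintype κ] {d : ℕ}
    (A : Matrix ι κ ℝ) (τ : Fin d → Finset ι) (a β : ℝ) (r R : ℕ) : Prop where
  cover : ∀ i : ι, ∃ l, i ∈ τ l
  alpha_le : ∀ l, a ≤ lambdaMinPos (rowSub A (τ l) * (rowSub A (τ l))ᵀ)
  le_beta : ∀ l, lambdaMax (rowSub A (τ l) * (rowSub A (τ l))ᵀ) ≤ β
  r_le : ∀ i : ι, r ≤ (Finset.univ.filter fun l => i ∈ τ l).card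
  r_attained : ∃ i : ι, (Finset.univ.filter fun l => i ∈ τ l).card = r
  le_R : ∀ i : ι, (Finset.univ.filter fun l => i ∈ τ l).card ≤ R
  R_attained : ∃ i : ι, (Finset.univ.filter fun l => i ∈ τ l).card = R

/-- One step of the block Kaczmarz method with block `τ`:
`x ↦ x + A_τ† (b_τ − A_τ x)`. -/
def kaczStep {ι κ : Type*} [Fintype ι] [Fintype κ] (A : Matrix ι κ ℝ) (b : ι → ℝ)
    (τ : Finset ι) (x : κ → ℝ) : κ → ℝ :=
  x + (mpinv (rowSub A τ)).mulVec (fun i : τ => b i.1 - (rowSub A τ).mulVec x i)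

/-- The iterates of the block (randomized) Kaczmarz method, as a function of the sequence
`σ` of block choices: `x_k = x_{k-1} + A_τ† (b_τ − A_τ x_{k-1})` with `τ = τs (σ k)`. -/
def kaczIter {ι κ : Type*} [Fintype ι] [Fintype κ] {d : ℕ} (A : Matrix ι κ ℝ) (b : ι → ℝ)
    (τs : Fin d → Finset ι) (x0 : κ → ℝ) : ∀ k : ℕ, (Fin k → Fin d) → κ → ℝ
  | 0, _ => x0
  | (k + 1), σ => kaczStep A b (τs (σ (Fin.last k))) (kaczIter A b τs x0 k (σ ∘ Fin.castSucc))

/-- `Q` is an oriented incidence matrix of the graph `G`, with `hd e` and `tl e` the head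
and tail of the (arbitrary) orientation of the edge indexed by the row `e`: the rows of
`Q` are in bijection with the edges of `G`, and the row of edge `{i, j}` has entry `+1`
in column `i`, `−1` in column `j`, and `0` elsewhere. -/
def IsOrientedIncidence {V E : Type*} [DecidableEq V] (G : SimpleGraph V)
    (hd tl : E → V) (Q : Matrix E V ℝ) : Prop :=
  (∀ e, G.Adj (hd e) (tl e)) ∧
  (∀ a b : V, G.Adj a b → ∃! e : E, s(hd e, tl e) = s(a, b)) ∧
  (∀ e v, Q e v = if v = hd e then 1 else if v = tl e then -1 else 0)

/-- The set of vertices incident to some edge of the block `τ`. -/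
def endpts {V E : Type*} [DecidableEq V] (hd tl : E → V) (τ : Finset E) : Finset V :=
  τ.biUnion fun e => {hd e, tl e}

/-- The edge-induced subgraph determined by the block `τ` is connected: any two of
its vertices are joined by a walk using only edges of `τ`. -/
def IsConnectedBlock {V E : Type*} [DecidableEq V] (hd tl : E → V) (τ : Finset E) : Prop :=
  ∀ a ∈ endpts hd tl τ, ∀ b ∈ endpts hd tl τ,
    (SimpleGraph.fromEdgeSet {p : Sym2 V | ∃ e ∈ τ, s(hd e, tl e) = p}).Reachable a b

set_option linter.unusedSectionVars false
set_option maxHeartbeats 1000000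

section Aux


variable {E F : Type*} [NormedAddCommGroup E] [NormedAddCommGroup F]
  [InnerProductSpace ℝ E] [InnerProductSpace ℝ F]
  [FiniteDimensional ℝ E] [FiniteDimensional ℝ F]

theorem exists_pinv_linmap (f : E →ₗ[ℝ] F) :
    ∃ g : F →ₗ[ℝ] E, (∀ x, f (g (f x)) = f x) ∧ (∀ z, g (f (g z)) = g z) ∧
      LinearMap.adjoint (f ∘ₗ g) = f ∘ₗ g ∧ LinearMap.adjoint (g ∘ₗ f) = g ∘ₗ f := by
  set K := LinearMap.ker f with hK
  let f'' : (Kᗮ : Submodule ℝ E) →ₗ[ℝ] LinearMap.range f :=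
    (f.comp Kᗮ.subtype).codRestrict (LinearMap.range f) (fun x => ⟨x, rfl⟩)
  have hinj : Function.Injective f'' := by
    intro x y hxy
    have : f x.1 = f y.1 := congrArg Subtype.val hxy
    have hxm : (x : E) - y ∈ K := by simp [hK, LinearMap.mem_ker, map_sub, this]
    have hxo : (x : E) - y ∈ Kᗮ := sub_mem x.2 y.2
    have := Submodule.mem_inf.2 ⟨hxm, hxo⟩
    rw [Submodule.inf_orthogonal_eq_bot] at this
    exact Subtype.ext (sub_eq_zero.1 this)
  have hsurj : Function.Surjective f'' := by
    rintro ⟨z, x, rfl⟩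
    obtain ⟨u, hu, v, hv, rfl⟩ := K.exists_add_mem_mem_orthogonal x
    refine ⟨⟨v, hv⟩, ?_⟩
    apply Subtype.ext
    show f v = f (u + v)
    simp [map_add, LinearMap.mem_ker.1 hu]
  let e : (Kᗮ : Submodule ℝ E) ≃ₗ[ℝ] LinearMap.range f :=
    LinearEquiv.ofBijective f'' ⟨hinj, hsurj⟩
  let g : F →ₗ[ℝ] E :=
    Kᗮ.subtype ∘ₗ (e.symm.toLinearMap) ∘ₗ
      (Submodule.orthogonalProjection (LinearMap.range f)).toLinearMap
  have hgmem : ∀ z, g z ∈ Kᗮ := fun z => (e.symm _).2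
  have hfg : ∀ z, f (g z) = Submodule.orthogonalProjection (LinearMap.range f) z := by
    intro z
    show f ((e.symm (Submodule.orthogonalProjection (LinearMap.range f) z) : E)) = _
    have : f'' (e.symm (Submodule.orthogonalProjection (LinearMap.range f) z))
        = Submodule.orthogonalProjection (LinearMap.range f) z := e.apply_symm_apply _
    exact congrArg Subtype.val this
  have hproj_eq : ∀ y : E, y ∈ Kᗮ → g (f y) = y := by
    intro y hy
    have h0 : f'' ⟨y, hy⟩ = ⟨f y, ⟨y, rfl⟩⟩ := rfl
    have h2 : e.symm ⟨f y, ⟨y, rfl⟩⟩ = ⟨y, hy⟩ := by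
      rw [← h0]; exact e.symm_apply_apply _
    show (e.symm ((Submodule.orthogonalProjection (LinearMap.range f)) (f y)) : E) = y
    have h3 : (Submodule.orthogonalProjection (LinearMap.range f)) (f y) = ⟨f y, ⟨y, rfl⟩⟩ :=
      Subtype.ext (Submodule.starProjection_eq_self_iff.2 ⟨y, rfl⟩)
    rw [h3, h2]
  have hgf : ∀ x, g (f x) = Submodule.orthogonalProjection Kᗮ x := by
    intro x
    have hmem : x - Submodule.orthogonalProjection Kᗮ x ∈ K := by
      have := Submodule.sub_starProjection_mem_orthogonal (K := Kᗮ) x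
      rwa [Submodule.orthogonal_orthogonal] at this
    have hx : f x = f (Submodule.orthogonalProjection Kᗮ x) := by
      have := LinearMap.mem_ker.1 hmem
      rw [map_sub] at this
      exact sub_eq_zero.1 this
    rw [hx]
    exact hproj_eq _ (Submodule.orthogonalProjection Kᗮ x).2
  refine ⟨g, ?_, ?_, ?_, ?_⟩
  · intro x
    rw [hgf x]
    have hmem : x - Submodule.orthogonalProjection Kᗮ x ∈ K := by
      have := Submodule.sub_starProjection_mem_orthogonal (K := Kᗮ) x
      rwa [Submodule.orthogonal_orthogonal] at this
    have := LinearMap.mem_ker.1 hmem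
    rw [map_sub, sub_eq_zero] at this
    exact this.symm
  · intro z
    have := hgf (g z)
    rw [this]; exact Submodule.starProjection_eq_self_iff.2 (hgmem z)
  · rw [eq_comm, LinearMap.eq_adjoint_iff]
    intro x y
    show (inner ℝ (f (g x)) y : ℝ) = inner ℝ x (f (g y))
    rw [hfg, hfg]; exact Submodule.inner_starProjection_left_eq_right _ _ _
  · rw [eq_comm, LinearMap.eq_adjoint_iff]
    intro x y
    show (inner ℝ (g (f x)) y : ℝ) = inner ℝ x (g (f y))
    rw [hgf, hgf]; exact Submodule.inner_starProjection_left_eq_right _ _ _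

lemma toEuclideanLin_mul' {l m n : Type*} [Fintype l] [Fintype m] [Fintype n]
    [DecidableEq m] [DecidableEq n] (A : Matrix l m ℝ) (B : Matrix m n ℝ) :
    Matrix.toEuclideanLin (A * B) = Matrix.toEuclideanLin A ∘ₗ Matrix.toEuclideanLin B := by
  apply LinearMap.ext; intro x
  simp [Matrix.toEuclideanLin_apply, Matrix.mulVec_mulVec]

theorem exists_pinv_matrix {m n : Type*} [Fintype m] [Fintype n] (A : Matrix m n ℝ) :
    ∃ B : Matrix n m ℝ,
      A * B * A = A ∧ B * A * B = B ∧ (A * B)ᵀ = A * B ∧ (B * A)ᵀ = B * A := by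
  classical
  obtain ⟨g, h1, h2, h3, h4⟩ := exists_pinv_linmap (Matrix.toEuclideanLin A)
  set B := (Matrix.toEuclideanLin (𝕜 := ℝ) (m := n) (n := m)).symm g with hBdef
  have hBg : Matrix.toEuclideanLin B = g := (Matrix.toEuclideanLin (𝕜 := ℝ)).apply_symm_apply g
  have inj := (Matrix.toEuclideanLin (𝕜 := ℝ) (m := m) (n := n)).injective
  have inj2 := (Matrix.toEuclideanLin (𝕜 := ℝ) (m := n) (n := m)).injective
  have injm := (Matrix.toEuclideanLin (𝕜 := ℝ) (m := m) (n := m)).injective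
  have injn := (Matrix.toEuclideanLin (𝕜 := ℝ) (m := n) (n := n)).injective
  refine ⟨B, ?_, ?_, ?_, ?_⟩
  · apply inj
    rw [toEuclideanLin_mul', toEuclideanLin_mul', hBg]
    exact LinearMap.ext fun x => h1 x
  · apply inj2
    rw [toEuclideanLin_mul', toEuclideanLin_mul', hBg]
    exact LinearMap.ext fun x => h2 x
  · apply injm
    have : ((A * B)ᵀ : Matrix m m ℝ) = (A * B)ᴴ := rfl
    rw [this, Matrix.toEuclideanLin_conjTranspose_eq_adjoint, toEuclideanLin_mul', hBg]
    exact h3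
  · apply injn
    have : ((B * A)ᵀ : Matrix n n ℝ) = (B * A)ᴴ := rfl
    rw [this, Matrix.toEuclideanLin_conjTranspose_eq_adjoint, toEuclideanLin_mul', hBg]
    exact h4



variable {k : Type*} [Fintype k] [DecidableEq k]

lemma mem_spectrum_iff_exists (M : Matrix k k ℝ) (μ : ℝ) :
    μ ∈ spectrum ℝ M ↔ ∃ v : k → ℝ, v ≠ 0 ∧ M *ᵥ v = μ • v := by
  rw [spectrum.mem_iff, Matrix.isUnit_iff_isUnit_det, isUnit_iff_ne_zero, not_not,
    ← Matrix.exists_mulVec_eq_zero_iff]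
  constructor
  · rintro ⟨v, hv, h⟩
    refine ⟨v, hv, ?_⟩
    have : (algebraMap ℝ (Matrix k k ℝ)) μ *ᵥ v = μ • v := by
      funext i
      simp [Matrix.algebraMap_eq_diagonal, Matrix.mulVec_diagonal, Pi.algebraMap_apply]
    rw [Matrix.sub_mulVec] at h
    have h2 := sub_eq_zero.1 h
    rw [this] at h2
    exact h2.symm
  · rintro ⟨v, hv, h⟩
    refine ⟨v, hv, ?_⟩
    rw [Matrix.sub_mulVec, h]
    funext i
    simp [Matrix.algebraMap_eq_diagonal, Matrix.mulVec_diagonal, Matrix.sub_mulVec, Pi.algebraMap_apply]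

section decomp
variable {M : Matrix k k ℝ} (hM : M.IsHermitian)

lemma toEuclideanLin_eigenvectorBasis (i : k) :
    Matrix.toEuclideanLin M (hM.eigenvectorBasis i) =
      hM.eigenvalues i • hM.eigenvectorBasis i := by
  apply (WithLp.equiv 2 (k → ℝ)).injective
  simp only [Matrix.toEuclideanLin_apply, Equiv.apply_symm_apply]
  have := hM.mulVec_eigenvectorBasis i
  convert this using 1 <;> simp

lemma inner_toEuclideanLin_eq (v : EuclideanSpace ℝ k) (i : k) :
    (inner ℝ (hM.eigenvectorBasis i) (Matrix.toEuclideanLin M v) : ℝ)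
      = hM.eigenvalues i * inner ℝ (hM.eigenvectorBasis i) v := by
  have hsym := (Matrix.isHermitian_iff_isSymmetric.1 hM)
  rw [← hsym (hM.eigenvectorBasis i) v, toEuclideanLin_eigenvectorBasis hM i,
    inner_smul_left]
  simp

lemma quad_decomp (v : EuclideanSpace ℝ k) :
    (inner ℝ v (Matrix.toEuclideanLin M v) : ℝ)
      = ∑ i, hM.eigenvalues i * (inner ℝ (hM.eigenvectorBasis i) v : ℝ)^2 := by
  rw [← (hM.eigenvectorBasis).sum_inner_mul_inner v (Matrix.toEuclideanLin M v)]
  refine Finset.sum_congr rfl fun i _ => ?_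
  rw [inner_toEuclideanLin_eq hM v i, real_inner_comm v (hM.eigenvectorBasis i)]
  ring

lemma norm_decomp (b : OrthonormalBasis k ℝ (EuclideanSpace ℝ k)) (v : EuclideanSpace ℝ k) :
    (inner ℝ v v : ℝ) = ∑ i, (inner ℝ (b i) v : ℝ)^2 := by
  rw [← b.sum_inner_mul_inner v v]
  refine Finset.sum_congr rfl fun i _ => ?_
  rw [real_inner_comm v (b i)]
  ring

end decomp

section mainspec
variable {M : Matrix k k ℝ}

lemma inner_euclidean (x y : EuclideanSpace ℝ k) : (inner ℝ x y : ℝ) = ∑ i, x i * y i := by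
  simp [PiLp.inner_apply, RCLike.inner_apply, starRingEnd_apply, star_trivial, mul_comm]

lemma equiv_symm_apply (v : k → ℝ) (i : k) : ((WithLp.equiv 2 (k → ℝ)).symm v) i = v i := rfl

lemma toEuclideanLin_apply' (M : Matrix k k ℝ) (v : k → ℝ) (i : k) :
    (Matrix.toEuclideanLin M ((WithLp.equiv 2 (k → ℝ)).symm v)) i = (M *ᵥ v) i := by
  rw [Matrix.toEuclideanLin_apply]
  rfl

lemma spectrum_subset_range (hM : M.IsHermitian) :
    spectrum ℝ M ⊆ Set.range hM.eigenvalues := by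
  intro μ hμ
  obtain ⟨v, hv, hMv⟩ := (mem_spectrum_iff_exists M μ).1 hμ
  set v' : EuclideanSpace ℝ k := (WithLp.equiv 2 (k → ℝ)).symm v with hv'
  have hvne : v' ≠ 0 := by
    intro h0
    apply hv
    funext i
    have := congrFun (congrArg (WithLp.equiv 2 (k → ℝ)) h0) i
    simpa [hv'] using this
  have hlin : Matrix.toEuclideanLin M v' = μ • v' := by
    apply (WithLp.equiv 2 (k → ℝ)).injective
    funext i
    have := congrFun hMv i
    simpa [Matrix.toEuclideanLin_apply, hv'] using this
  have : ∃ i, (inner ℝ (hM.eigenvectorBasis i) v' : ℝ) ≠ 0 := by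
    by_contra hcon
    push_neg at hcon
    have h2 : (inner ℝ v' v' : ℝ) = 0 := by
      rw [norm_decomp hM.eigenvectorBasis v']
      exact Finset.sum_eq_zero fun i _ => by rw [hcon i]; ring
    exact hvne ((@inner_self_eq_zero ℝ _ _ _ _ v').1 h2)
  obtain ⟨i, hi⟩ := this
  refine ⟨i, ?_⟩
  have h1 := inner_toEuclideanLin_eq hM v' i
  rw [hlin, inner_smul_right] at h1
  have := mul_right_cancel₀ hi h1.symm
  simpa using this

lemma quad_le_sup (hM : M.IsHermitian) {b : ℝ} (hb : ∀ μ ∈ spectrum ℝ M, μ ≤ b) (v : k → ℝ) :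
    v ⬝ᵥ (M *ᵥ v) ≤ b * ∑ i, (v i)^2 := by
  set v' : EuclideanSpace ℝ k := (WithLp.equiv 2 (k → ℝ)).symm v with hv'
  have h1 : v ⬝ᵥ (M *ᵥ v) = (inner ℝ v' (Matrix.toEuclideanLin M v') : ℝ) := by
    rw [inner_euclidean]
    refine Finset.sum_congr rfl fun i _ => ?_
    rw [toEuclideanLin_apply' M v i]
    rfl
  have h2 : ∑ i, (v i)^2 = (inner ℝ v' v' : ℝ) := by
    rw [inner_euclidean]
    exact Finset.sum_congr rfl fun i _ => (sq (v i) ▸ rfl)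
  rw [h1, h2, quad_decomp hM v', norm_decomp hM.eigenvectorBasis v', Finset.mul_sum]
  refine Finset.sum_le_sum fun i _ => ?_
  exact mul_le_mul_of_nonneg_right (hb _ (hM.eigenvalues_mem_spectrum_real i)) (sq_nonneg _)

lemma quad_ge_inf (hM : M.PosSemidef)
    (hker : ∀ w : k → ℝ, M *ᵥ w = 0 → ∃ t : ℝ, ∀ i, w i = t)
    (v : k → ℝ) (hv : ∑ i, v i = 0) :
    sInf {μ : ℝ | μ ≠ 0 ∧ μ ∈ spectrum ℝ M} * ∑ i, (v i)^2 ≤ v ⬝ᵥ (M *ᵥ v) := by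
  have hherm := hM.isHermitian
  set a := sInf {μ : ℝ | μ ≠ 0 ∧ μ ∈ spectrum ℝ M} with ha
  set v' : EuclideanSpace ℝ k := (WithLp.equiv 2 (k → ℝ)).symm v with hv'
  have h1 : v ⬝ᵥ (M *ᵥ v) = (inner ℝ v' (Matrix.toEuclideanLin M v') : ℝ) := by
    rw [inner_euclidean]
    refine Finset.sum_congr rfl fun i _ => ?_
    rw [toEuclideanLin_apply' M v i]
    rfl
  have h2 : ∑ i, (v i)^2 = (inner ℝ v' v' : ℝ) := by
    rw [inner_euclidean]
    exact Finset.sum_congr rfl fun i _ => (sq (v i) ▸ rfl)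
  have hbdd : BddBelow {μ : ℝ | μ ≠ 0 ∧ μ ∈ spectrum ℝ M} := by
    apply Set.Finite.bddBelow
    apply Set.Finite.subset (Set.finite_range hherm.eigenvalues)
    exact fun μ hμ => spectrum_subset_range hherm hμ.2
  rw [h1, h2, quad_decomp hherm v', norm_decomp hherm.eigenvectorBasis v', Finset.mul_sum]
  refine Finset.sum_le_sum fun i _ => ?_
  by_cases hzero : hherm.eigenvalues i = 0
  · have hker_i : M *ᵥ ⇑(hherm.eigenvectorBasis i) = 0 := by
      rw [hherm.mulVec_eigenvectorBasis i, hzero, zero_smul]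
    obtain ⟨t, ht⟩ := hker _ hker_i
    have : (inner ℝ (hherm.eigenvectorBasis i) v' : ℝ) = 0 := by
      rw [inner_euclidean]
      calc ∑ j, (hherm.eigenvectorBasis i) j * v' j = ∑ j, t * v j :=
            Finset.sum_congr rfl fun j _ => congrArg (· * v j) (ht j)
        _ = 0 := by rw [← Finset.mul_sum, hv, mul_zero]
    rw [this, hzero]
    simp
  · have hmem : hherm.eigenvalues i ∈ {μ : ℝ | μ ≠ 0 ∧ μ ∈ spectrum ℝ M} :=
      ⟨hzero, hherm.eigenvalues_mem_spectrum_real i⟩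
    exact mul_le_mul_of_nonneg_right (csInf_le hbdd hmem) (sq_nonneg _)

end mainspec
section alg
variable {m n : Type*} [Fintype m] [Fintype n]

theorem mpinv_spec (A : Matrix m n ℝ) :
    A * mpinv A * A = A ∧ mpinv A * A * mpinv A = mpinv A ∧
      (A * mpinv A)ᵀ = A * mpinv A ∧ (mpinv A * A)ᵀ = mpinv A * A := by
  rw [mpinv, dif_pos (exists_pinv_matrix A)]
  exact (exists_pinv_matrix A).choose_spec

lemma sqNorm_eq_dot {k : Type*} [Fintype k] (v : k → ℝ) : sqNorm v = v ⬝ᵥ v := by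
  simp [sqNorm, dotProduct, sq]

lemma sqNorm_nonneg {k : Type*} [Fintype k] (v : k → ℝ) : 0 ≤ sqNorm v :=
  Finset.sum_nonneg fun i _ => sq_nonneg _

lemma proj_idem (A : Matrix m n ℝ) :
    (mpinv A * A) * (mpinv A * A) = mpinv A * A := by
  obtain ⟨h1, h2, h3, h4⟩ := mpinv_spec A
  calc (mpinv A * A) * (mpinv A * A) = (mpinv A * A * mpinv A) * A := by
        simp only [Matrix.mul_assoc]
    _ = mpinv A * A := by rw [h2]

lemma proj_symm (A : Matrix m n ℝ) : (mpinv A * A)ᵀ = mpinv A * A := (mpinv_spec A).2.2.2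

lemma mulVec_proj (A : Matrix m n ℝ) (x : n → ℝ) :
    A *ᵥ ((mpinv A * A) *ᵥ x) = A *ᵥ x := by
  rw [Matrix.mulVec_mulVec, ← Matrix.mul_assoc, (mpinv_spec A).1]

lemma dot_proj (A : Matrix m n ℝ) (x : n → ℝ) :
    x ⬝ᵥ ((mpinv A * A) *ᵥ x) = ((mpinv A * A) *ᵥ x) ⬝ᵥ ((mpinv A * A) *ᵥ x) := by
  set N := mpinv A * A with hN
  have key : (N *ᵥ x) ᵥ* N = N *ᵥ x := by
    have h0 : (N *ᵥ x) ᵥ* N = Nᵀ *ᵥ (N *ᵥ x) := (Matrix.mulVec_transpose N (N *ᵥ x)).symm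
    rw [h0, proj_symm, Matrix.mulVec_mulVec, proj_idem]
  symm
  calc (N *ᵥ x) ⬝ᵥ (N *ᵥ x) = ((N *ᵥ x) ᵥ* N) ⬝ᵥ x := Matrix.dotProduct_mulVec _ N x
    _ = (N *ᵥ x) ⬝ᵥ x := by rw [key]
    _ = x ⬝ᵥ (N *ᵥ x) := dotProduct_comm _ _

lemma sqNorm_sub_proj (A : Matrix m n ℝ) (x : n → ℝ) :
    sqNorm (x - (mpinv A * A) *ᵥ x) = sqNorm x - sqNorm ((mpinv A * A) *ᵥ x) := by
  set w := (mpinv A * A) *ᵥ x with hw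
  have h := dot_proj A x
  simp only [sqNorm, Pi.sub_apply]
  have expand : ∀ i : n, (x i - w i)^2 = x i^2 - 2 * (x i * w i) + w i^2 := fun i => by ring
  rw [Finset.sum_congr rfl fun i _ => expand i]
  rw [Finset.sum_add_distrib, Finset.sum_sub_distrib, ← Finset.mul_sum]
  have hxw : ∑ i, x i * w i = ∑ i, w i^2 := by
    have h1 : x ⬝ᵥ w = ∑ i, x i * w i := rfl
    have h2 : w ⬝ᵥ w = ∑ i, w i * w i := rfl
    rw [h1, h2] at h
    rw [h]
    exact Finset.sum_congr rfl fun i _ => (sq (w i)).symm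
  rw [hxw]
  ring

lemma spec_upper {ι κ : Type*} [Fintype ι] [Fintype κ] [DecidableEq ι] [DecidableEq κ] (A : Matrix ι κ ℝ) {β : ℝ}
    (hβ : sSup (spectrum ℝ (A * Aᵀ)) ≤ β) : ∀ μ ∈ spectrum ℝ (Aᵀ * A), μ ≤ β := by
  classical
  have hAAT : (A * Aᵀ).PosSemidef := by
    have := Matrix.posSemidef_self_mul_conjTranspose A
    exact this
  have hherm := hAAT.isHermitian
  have hbdd : BddAbove (spectrum ℝ (A * Aᵀ)) :=
    Set.Finite.bddAbove ((Set.finite_range hherm.eigenvalues).subset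
      (spectrum_subset_range hherm))
  have hβ0 : 0 ≤ β := by
    rcases isEmpty_or_nonempty ι with hι | hι
    · have hempty : spectrum ℝ (A * Aᵀ) = ∅ := by
        ext μ
        simp only [Set.mem_empty_iff_false, iff_false]
        intro hμ
        obtain ⟨v, hv, -⟩ := (mem_spectrum_iff_exists _ μ).1 hμ
        exact hv (funext fun i => (IsEmpty.elim hι i))
      rw [hempty, Real.sSup_empty] at hβ
      exact hβ
    · obtain ⟨i0⟩ := hι
      have h1 := hAAT.eigenvalues_nonneg i0
      have h2 : hAAT.isHermitian.eigenvalues i0 ∈ spectrum ℝ (A * Aᵀ) :=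
        hherm.eigenvalues_mem_spectrum_real i0
      exact le_trans h1 (le_trans (le_csSup hbdd h2) hβ)
  intro μ hμ
  by_cases hμ0 : μ = 0
  · exact hμ0 ▸ hβ0
  obtain ⟨v, hv, hMv⟩ := (mem_spectrum_iff_exists _ μ).1 hμ
  have hAv : A *ᵥ v ≠ 0 := by
    intro h0
    apply hv
    have : (Aᵀ * A) *ᵥ v = 0 := by
      rw [← Matrix.mulVec_mulVec, h0, Matrix.mulVec_zero]
    rw [hMv] at this
    exact (smul_eq_zero.1 this).resolve_left hμ0
  have hspec : μ ∈ spectrum ℝ (A * Aᵀ) := by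
    rw [mem_spectrum_iff_exists]
    refine ⟨A *ᵥ v, hAv, ?_⟩
    calc (A * Aᵀ) *ᵥ (A *ᵥ v) = A *ᵥ ((Aᵀ * A) *ᵥ v) := by
          rw [Matrix.mulVec_mulVec, Matrix.mulVec_mulVec, Matrix.mul_assoc]
      _ = μ • (A *ᵥ v) := by rw [hMv, Matrix.mulVec_smul]
  exact le_trans (le_csSup hbdd hspec) hβ

lemma sqNorm_mulVec_le [DecidableEq m] [DecidableEq n] (A : Matrix m n ℝ) {β : ℝ}
    (hβ : sSup (spectrum ℝ (A * Aᵀ)) ≤ β) (w : n → ℝ) :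
    sqNorm (A *ᵥ w) ≤ β * sqNorm w := by
  classical
  have hherm : (Aᵀ * A).IsHermitian := (Matrix.posSemidef_conjTranspose_mul_self A).isHermitian
  have key : sqNorm (A *ᵥ w) = w ⬝ᵥ ((Aᵀ * A) *ᵥ w) := by
    rw [sqNorm_eq_dot]
    rw [Matrix.dotProduct_mulVec (A *ᵥ w) A w]
    rw [← Matrix.mulVec_mulVec]
    rw [dotProduct_comm]
    congr 1
    rw [Matrix.mulVec_transpose]
  rw [key]
  have := quad_le_sup hherm (spec_upper A hβ) w
  simpa [sqNorm] using this

lemma proj_lower [DecidableEq m] [DecidableEq n] (A : Matrix m n ℝ) {β : ℝ}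
    (hβ : sSup (spectrum ℝ (A * Aᵀ)) ≤ β) (x : n → ℝ) :
    sqNorm (A *ᵥ x) ≤ β * sqNorm ((mpinv A * A) *ᵥ x) := by
  have := sqNorm_mulVec_le A hβ ((mpinv A * A) *ᵥ x)
  rwa [mulVec_proj A x] at this

lemma sum_proj_eq_zero (A : Matrix m n ℝ) (hA : ∀ i, ∑ j, A i j = 0) (x : n → ℝ) :
    ∑ j, ((mpinv A * A) *ᵥ x) j = 0 := by
  have hN : mpinv A * A = Aᵀ * (mpinv A)ᵀ := by
    rw [← Matrix.transpose_mul, proj_symm]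
  rw [hN, ← Matrix.mulVec_mulVec]
  set u := (mpinv A)ᵀ *ᵥ x with hu
  have : ∀ j, (Aᵀ *ᵥ u) j = ∑ i, A i j * u i := by
    intro j
    simp [Matrix.mulVec, dotProduct, Matrix.transpose_apply]
  rw [Finset.sum_congr rfl fun j _ => this j, Finset.sum_comm]
  refine Finset.sum_eq_zero fun i _ => ?_
  rw [← Finset.sum_mul, hA i, zero_mul]

lemma mulVec_const_zero (A : Matrix m n ℝ) (hA : ∀ i, ∑ j, A i j = 0) (t : ℝ) :
    A *ᵥ (fun _ => t) = 0 := by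
  funext i
  simp only [Matrix.mulVec, dotProduct]
  rw [show (∑ j, A i j * t) = (∑ j, A i j) * t from (Finset.sum_mul _ _ _).symm, hA i, zero_mul]
  rfl

end alg
section graph
variable {V E : Type*} [Fintype V] [DecidableEq V] [Fintype E] [DecidableEq E]
  {G : SimpleGraph V} {hd tl : E → V} {Q : Matrix E V ℝ}

lemma incidence_row_sum (hinc : IsOrientedIncidence G hd tl Q) (e : E) :
    ∑ v, Q e v = 0 := by
  have hne : hd e ≠ tl e := (hinc.1 e).ne
  have hfun : ∀ v, Q e v = (Pi.single (hd e) (1:ℝ) : V → ℝ) v + (Pi.single (tl e) (-1:ℝ) : V → ℝ) v := by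
    intro v
    rw [hinc.2.2 e v]
    by_cases h1 : v = hd e
    · subst h1
      simp [Pi.single_apply, hne, Ne.symm hne]
    · by_cases h2 : v = tl e <;> simp [Pi.single_apply, h1, h2, Ne.symm hne]
  rw [Finset.sum_congr rfl fun v _ => hfun v, Finset.sum_add_distrib]
  simp [Finset.sum_pi_single']

lemma incidence_mulVec (hinc : IsOrientedIncidence G hd tl Q) (y : V → ℝ) (e : E) :
    (Q *ᵥ y) e = y (hd e) - y (tl e) := by
  have hne : hd e ≠ tl e := (hinc.1 e).ne
  have hfun : ∀ v, Q e v * y v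
      = (Pi.single (hd e) (y (hd e)) : V → ℝ) v + (Pi.single (tl e) (-(y (tl e))) : V → ℝ) v := by
    intro v
    rw [hinc.2.2 e v]
    by_cases h1 : v = hd e
    · subst h1
      simp [Pi.single_apply, hne, Ne.symm hne]
    · by_cases h2 : v = tl e
      · subst h2
        simp [Pi.single_apply, h1, hne, Ne.symm hne]
      · simp [Pi.single_apply, h1, h2]
  show ∑ v, Q e v * y v = _
  rw [Finset.sum_congr rfl fun v _ => hfun v, Finset.sum_add_distrib]
  simp [Finset.sum_pi_single']
  ring

lemma dot_transpose_mul {m n : Type*} [Fintype m] [Fintype n] (A : Matrix m n ℝ) (w : n → ℝ) :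
    sqNorm (A *ᵥ w) = w ⬝ᵥ ((Aᵀ * A) *ᵥ w) := by
  rw [sqNorm_eq_dot, Matrix.dotProduct_mulVec (A *ᵥ w) A w, ← Matrix.mulVec_mulVec,
    dotProduct_comm]
  congr 1
  rw [Matrix.mulVec_transpose]

lemma incidence_kernel (hG : G.Connected) (hinc : IsOrientedIncidence G hd tl Q) :
    ∀ y : V → ℝ, (Qᵀ * Q) *ᵥ y = 0 → ∃ t : ℝ, ∀ v, y v = t := by
  intro y hy
  have hquad : sqNorm (Q *ᵥ y) = 0 := by
    rw [dot_transpose_mul, hy, dotProduct_zero]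
  have hQy : ∀ e, (Q *ᵥ y) e = 0 := by
    intro e
    have := (Finset.sum_eq_zero_iff_of_nonneg (fun i _ => sq_nonneg ((Q *ᵥ y) i))).1 hquad
      e (Finset.mem_univ e)
    exact pow_eq_zero_iff (by norm_num) |>.1 this
  have hadj : ∀ a b : V, G.Adj a b → y a = y b := by
    intro a b hab
    obtain ⟨e, he, -⟩ := hinc.2.1 a b hab
    have h1 : y (hd e) = y (tl e) := by
      have := hQy e
      rw [incidence_mulVec hinc y e] at this
      linarith
    rcases Sym2.eq_iff.1 he with ⟨ha, hb⟩ | ⟨ha, hb⟩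
    · rw [← ha, ← hb]; exact h1
    · rw [← ha, ← hb]; exact h1.symm
  have hwalk : ∀ a b : V, G.Reachable a b → y a = y b := by
    intro a b hr
    obtain ⟨w⟩ := hr
    induction w with
    | nil => rfl
    | cons h p ih => exact (hadj _ _ h).trans ih
  have : Nonempty V := hG.nonempty
  obtain ⟨v0⟩ := this
  exact ⟨y v0, fun v => hwalk v v0 (hG.preconnected v v0)⟩

end graph
section step
variable {V E : Type*} [Fintype V] [DecidableEq V] [Fintype E] [DecidableEq E]

lemma beta_nonneg {ι κ : Type*} [Fintype ι] [Fintype κ] [DecidableEq ι] [DecidableEq κ]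
    (A : Matrix ι κ ℝ) {β : ℝ} (hβ : sSup (spectrum ℝ (A * Aᵀ)) ≤ β) : 0 ≤ β := by
  have hAAT : (A * Aᵀ).PosSemidef := Matrix.posSemidef_self_mul_conjTranspose A
  have hherm := hAAT.isHermitian
  have hbdd : BddAbove (spectrum ℝ (A * Aᵀ)) :=
    Set.Finite.bddAbove ((Set.finite_range hherm.eigenvalues).subset
      (spectrum_subset_range hherm))
  rcases isEmpty_or_nonempty ι with hι | hι
  · have hempty : spectrum ℝ (A * Aᵀ) = ∅ := by
      ext μ
      simp only [Set.mem_empty_iff_false, iff_false]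
      intro hμ
      obtain ⟨v, hv, -⟩ := (mem_spectrum_iff_exists _ μ).1 hμ
      exact hv (funext fun i => (IsEmpty.elim hι i))
    rw [hempty, Real.sSup_empty] at hβ
    exact hβ
  · obtain ⟨i0⟩ := hι
    exact le_trans (hAAT.eigenvalues_nonneg i0)
      (le_trans (le_csSup hbdd (hherm.eigenvalues_mem_spectrum_real i0)) hβ)

lemma rowSub_row_sum (Q : Matrix E V ℝ) (hrow : ∀ e, ∑ v, Q e v = 0) (τ : Finset E)
    (i : τ) : ∑ v, rowSub Q τ i v = 0 := hrow i.1

lemma sqNorm_rowSub (Q : Matrix E V ℝ) (τ : Finset E) (y : V → ℝ) :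
    sqNorm (rowSub Q τ *ᵥ y) = ∑ e ∈ τ, ((Q *ᵥ y) e)^2 := by
  rw [sqNorm]
  rw [← Finset.sum_attach τ fun e => ((Q *ᵥ y) e)^2]
  rfl

lemma double_count {d : ℕ} (τs : Fin d → Finset E) (g : E → ℝ) :
    ∑ l : Fin d, ∑ e ∈ τs l, g e
      = ∑ e : E, ((Finset.univ.filter fun l => e ∈ τs l).card : ℝ) * g e := by
  have h1 : ∀ l : Fin d, ∑ e ∈ τs l, g e = ∑ e : E, if e ∈ τs l then g e else 0 := by
    intro l
    rw [Finset.sum_ite_mem, Finset.univ_inter]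
  rw [Finset.sum_congr rfl fun l _ => h1 l, Finset.sum_comm]
  refine Finset.sum_congr rfl fun e _ => ?_
  rw [Finset.sum_ite, Finset.sum_const, Finset.sum_const]
  simp [nsmul_eq_mul]

lemma gossip_step {d : ℕ} (Q : Matrix E V ℝ)
    (hrow : ∀ e, ∑ v, Q e v = 0)
    (hker : ∀ y : V → ℝ, (Qᵀ * Q) *ᵥ y = 0 → ∃ t : ℝ, ∀ v, y v = t)
    {α β : ℝ} {r R : ℕ} {τs : Fin d → Finset E} (hcov : IsRowCovering Q τs α β r R)
    (y : V → ℝ) (hy : ∑ v, y v = 0) :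
    ∑ l : Fin d, sqNorm (y - (mpinv (rowSub Q (τs l)) * rowSub Q (τs l)) *ᵥ y)
      ≤ (d : ℝ) * (1 - (r : ℝ) * lambdaMinPos (Qᵀ * Q) / (β * (d : ℝ))) * sqNorm y := by
  rcases Nat.eq_zero_or_pos d with hd0 | hdpos
  · subst hd0
    simp
  set a := lambdaMinPos (Qᵀ * Q) with ha
  -- a * sqNorm y ≤ y ⬝ Qᵀ Q y
  have hPSD : (Qᵀ * Q).PosSemidef := Matrix.posSemidef_conjTranspose_mul_self Q
  have hquad : a * sqNorm y ≤ sqNorm (Q *ᵥ y) := by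
    rw [dot_transpose_mul Q y]
    have := quad_ge_inf hPSD hker y hy
    simpa [ha, lambdaMinPos, sqNorm] using this
  have l0 : Fin d := ⟨0, hdpos⟩
  have hβ0 : 0 ≤ β := beta_nonneg (rowSub Q (τs l0)) (hcov.le_beta l0)
  -- Pythagoras per block
  have hpyth : ∀ l : Fin d, sqNorm (y - (mpinv (rowSub Q (τs l)) * rowSub Q (τs l)) *ᵥ y)
      = sqNorm y - sqNorm ((mpinv (rowSub Q (τs l)) * rowSub Q (τs l)) *ᵥ y) := fun l =>
    sqNorm_sub_proj (rowSub Q (τs l)) y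
  rcases eq_or_lt_of_le hβ0 with hβeq | hβpos
  · -- β = 0 : bound each term by sqNorm y
    have : ∀ l : Fin d, sqNorm (y - (mpinv (rowSub Q (τs l)) * rowSub Q (τs l)) *ᵥ y)
        ≤ sqNorm y := by
      intro l
      rw [hpyth l]
      have := sqNorm_nonneg ((mpinv (rowSub Q (τs l)) * rowSub Q (τs l)) *ᵥ y)
      linarith
    calc ∑ l : Fin d, sqNorm (y - (mpinv (rowSub Q (τs l)) * rowSub Q (τs l)) *ᵥ y)
        ≤ ∑ l : Fin d, sqNorm y := Finset.sum_le_sum fun l _ => this l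
      _ = (d : ℝ) * sqNorm y := by rw [Finset.sum_const]; simp [nsmul_eq_mul]
      _ = (d : ℝ) * (1 - (r : ℝ) * a / (β * (d : ℝ))) * sqNorm y := by
          rw [← hβeq]
          norm_num
  -- β > 0
  have hsum_blocks : (r : ℝ) * sqNorm (Q *ᵥ y)
      ≤ ∑ l : Fin d, sqNorm (rowSub Q (τs l) *ᵥ y) := by
    have h1 : ∑ l : Fin d, sqNorm (rowSub Q (τs l) *ᵥ y)
        = ∑ e : E, ((Finset.univ.filter fun l => e ∈ τs l).card : ℝ) * ((Q *ᵥ y) e)^2 := by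
      rw [Finset.sum_congr rfl fun l _ => sqNorm_rowSub Q (τs l) y]
      exact double_count τs _
    rw [h1, sqNorm, Finset.mul_sum]
    refine Finset.sum_le_sum fun e _ => ?_
    have := hcov.r_le e
    exact mul_le_mul_of_nonneg_right (by exact_mod_cast this) (sq_nonneg _)
  have hblock : ∀ l : Fin d, sqNorm (y - (mpinv (rowSub Q (τs l)) * rowSub Q (τs l)) *ᵥ y)
      ≤ sqNorm y - (1/β) * sqNorm (rowSub Q (τs l) *ᵥ y) := by
    intro l
    rw [hpyth l]
    have hlow := proj_lower (rowSub Q (τs l)) (hcov.le_beta l) y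
    have : (1/β) * sqNorm (rowSub Q (τs l) *ᵥ y)
        ≤ sqNorm ((mpinv (rowSub Q (τs l)) * rowSub Q (τs l)) *ᵥ y) := by
      rw [div_mul_eq_mul_div, one_mul, div_le_iff₀ hβpos]
      linarith [hlow]
    linarith
  calc ∑ l : Fin d, sqNorm (y - (mpinv (rowSub Q (τs l)) * rowSub Q (τs l)) *ᵥ y)
      ≤ ∑ l : Fin d, (sqNorm y - (1/β) * sqNorm (rowSub Q (τs l) *ᵥ y)) :=
        Finset.sum_le_sum fun l _ => hblock l
    _ = (d : ℝ) * sqNorm y - (1/β) * ∑ l : Fin d, sqNorm (rowSub Q (τs l) *ᵥ y) := by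
        rw [Finset.sum_sub_distrib, Finset.sum_const, ← Finset.mul_sum]
        simp [nsmul_eq_mul]
    _ ≤ (d : ℝ) * sqNorm y - (1/β) * ((r : ℝ) * (a * sqNorm y)) := by
        have h2 : (r : ℝ) * (a * sqNorm y) ≤ ∑ l : Fin d, sqNorm (rowSub Q (τs l) *ᵥ y) := by
          refine le_trans ?_ hsum_blocks
          exact mul_le_mul_of_nonneg_left hquad (by positivity)
        have h3 : (0:ℝ) < 1/β := by positivity
        nlinarith [h2, h3]
    _ = (d : ℝ) * (1 - (r : ℝ) * a / (β * (d : ℝ))) * sqNorm y := by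
        have hdne : (d : ℝ) ≠ 0 := by positivity
        field_simp

end step
section main
variable {V E : Type*} [Fintype V] [DecidableEq V] [Fintype E] [DecidableEq E]

lemma kaczStep_zero_eq (Q : Matrix E V ℝ) (τ : Finset E) (x : V → ℝ) :
    kaczStep Q (0 : E → ℝ) τ x = x - (mpinv (rowSub Q τ) * rowSub Q τ) *ᵥ x := by
  rw [kaczStep]
  have h1 : (fun i : τ => (0 : E → ℝ) i.1 - (rowSub Q τ).mulVec x i)
      = -((rowSub Q τ) *ᵥ x) := by
    funext i
    simp
  rw [h1, Matrix.mulVec_neg, ← Matrix.mulVec_mulVec]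
  funext v
  simp [sub_eq_add_neg]

lemma kstep_sub (Q : Matrix E V ℝ) (hrow : ∀ e, ∑ v, Q e v = 0) (τ : Finset E)
    (x : V → ℝ) {t : ℝ} (cstar : V → ℝ) (hcst : cstar = fun _ => t) :
    kaczStep Q (0 : E → ℝ) τ x - cstar
      = (x - cstar) - (mpinv (rowSub Q τ) * rowSub Q τ) *ᵥ (x - cstar) := by
  have hc0 : (mpinv (rowSub Q τ) * rowSub Q τ) *ᵥ cstar = 0 := by
    rw [← Matrix.mulVec_mulVec, hcst,
      mulVec_const_zero (rowSub Q τ) (fun i => hrow i.1) t, Matrix.mulVec_zero]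
  rw [kaczStep_zero_eq, Matrix.mulVec_sub, hc0, sub_zero, sub_right_comm]


end main

end Aux

/-- **Corollary (convergence of the block gossip method).** If `G` is connected with
oriented incidence matrix `Q` and `T` is a `(d, α, β, r, R)` row covering of `Q`, then
the block gossip method (= block randomized Kaczmarz on `Q x = 0` started at the initial
node values `c`; expectation = average over all uniform i.i.d. block choice sequences)
converges linearly to the consensus vector `c* = mean(c)·1`:
`E‖c_k − c*‖² ≤ (1 − r α(G)/(β d))ᵏ ‖c − c*‖²`, where the algebraic connectivity
`α(G)` is the smallest nonzero eigenvalue of the Laplacian `L = QᵀQ`. -/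
theorem block_gossip_convergence {V E : Type*} [Fintype V] [DecidableEq V]
    [Fintype E] [DecidableEq E] {d : ℕ}
    (G : SimpleGraph V) (hG : G.Connected)
    (Q : Matrix E V ℝ) (hQ : ∃ hd tl : E → V, IsOrientedIncidence G hd tl Q)
    (α β : ℝ) (r R : ℕ) (τs : Fin d → Finset E)
    (hcov : IsRowCovering Q τs α β r R)
    (c cstar : V → ℝ)
    (hcstar : cstar = fun _ => (∑ v, c v) / (Fintype.card V : ℝ)) :
    ∀ k : ℕ,
      (∑ σ : Fin k → Fin d, sqNorm (kaczIter Q 0 τs c k σ - cstar)) / (d : ℝ) ^ k ≤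
        (1 - (r : ℝ) * lambdaMinPos (Qᵀ * Q) / (β * d)) ^ k * sqNorm (c - cstar) := by
  obtain ⟨hd, tl, hinc⟩ := hQ
  have hrow := incidence_row_sum hinc
  have hker := incidence_kernel hG hinc
  set a := lambdaMinPos (Qᵀ * Q) with ha
  set ρ : ℝ := 1 - (r : ℝ) * a / (β * d) with hρ
  obtain ⟨e0, -⟩ := hcov.r_attained
  obtain ⟨l0, -⟩ := hcov.cover e0
  have hdpos : 0 < d := l0.pos
  have hne : hd e0 ≠ tl e0 := (hinc.1 e0).ne
  -- test vector gives ρ ≥ 0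
  have hρ0 : 0 ≤ ρ := by
    set y0 : V → ℝ :=
      fun v => (Pi.single (hd e0) 1 : V → ℝ) v - (Pi.single (tl e0) 1 : V → ℝ) v with hy0
    have hy0sum : ∑ v, y0 v = 0 := by
      simp [hy0, Finset.sum_sub_distrib, Finset.sum_pi_single']
    have hy0pos : 0 < sqNorm y0 := by
      have h1 : y0 (hd e0) = 1 := by
        simp [hy0, Pi.single_apply, hne]
      have h2 : (y0 (hd e0))^2 ≤ sqNorm y0 :=
        Finset.single_le_sum (f := fun v => (y0 v)^2) (fun v _ => sq_nonneg _)
          (Finset.mem_univ _)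
      rw [h1] at h2
      linarith
    have hstep0 := gossip_step Q hrow hker hcov y0 hy0sum
    have hLHS : (0:ℝ) ≤ ∑ l : Fin d,
        sqNorm (y0 - (mpinv (rowSub Q (τs l)) * rowSub Q (τs l)) *ᵥ y0) :=
      Finset.sum_nonneg fun l _ => sqNorm_nonneg _
    have hd0 : (0:ℝ) < (d : ℝ) := by exact_mod_cast hdpos
    have hstep0' : (0:ℝ) ≤ (d:ℝ) * ρ * sqNorm y0 := by
      refine le_trans hLHS ?_
      rw [hρ, ha]
      exact hstep0
    nlinarith [hstep0', hy0pos, hd0, mul_pos hd0 hy0pos]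
  have hcard : (0:ℝ) < (Fintype.card V : ℝ) := by
    have : Nonempty V := ⟨hd e0⟩
    exact_mod_cast Fintype.card_pos
  -- invariant
  have hinv : ∀ k (σ : Fin k → Fin d), ∑ v, (kaczIter Q 0 τs c k σ v - cstar v) = 0 := by
    intro k
    induction k with
    | zero =>
      intro σ
      show ∑ v, (c v - cstar v) = 0
      rw [Finset.sum_sub_distrib, hcstar]
      rw [Finset.sum_const]
      rw [nsmul_eq_mul]
      field_simp
      simp
    | succ k ih =>
      intro σ
      have hstepeq : kaczIter Q 0 τs c (k+1) σ - cstar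
          = (kaczIter Q 0 τs c k (σ ∘ Fin.castSucc) - cstar)
            - (mpinv (rowSub Q (τs (σ (Fin.last k)))) * rowSub Q (τs (σ (Fin.last k)))) *ᵥ
              (kaczIter Q 0 τs c k (σ ∘ Fin.castSucc) - cstar) := by
        show kaczStep Q 0 (τs (σ (Fin.last k))) (kaczIter Q 0 τs c k (σ ∘ Fin.castSucc)) - cstar = _
        exact kstep_sub Q hrow _ _ cstar hcstar
      have : ∑ v, (kaczIter Q 0 τs c (k+1) σ v - cstar v)
          = ∑ v, ((kaczIter Q 0 τs c k (σ ∘ Fin.castSucc) - cstar) v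
            - ((mpinv (rowSub Q (τs (σ (Fin.last k)))) * rowSub Q (τs (σ (Fin.last k)))) *ᵥ
              (kaczIter Q 0 τs c k (σ ∘ Fin.castSucc) - cstar)) v) := by
        refine Finset.sum_congr rfl fun v _ => ?_
        have := congrFun hstepeq v
        simpa using this
      rw [this, Finset.sum_sub_distrib]
      rw [sum_proj_eq_zero (rowSub Q (τs (σ (Fin.last k)))) (fun i => hrow i.1)
        (kaczIter Q 0 τs c k (σ ∘ Fin.castSucc) - cstar)]
      have h2 : ∑ v, (kaczIter Q 0 τs c k (σ ∘ Fin.castSucc) - cstar) v = 0 := ih _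
      rw [h2]
      ring
  -- main induction
  have hmain : ∀ k : ℕ, (∑ σ : Fin k → Fin d, sqNorm (kaczIter Q 0 τs c k σ - cstar))
      ≤ ((d : ℝ) * ρ)^k * sqNorm (c - cstar) := by
    intro k
    induction k with
    | zero =>
      rw [Fintype.sum_unique]
      simp [kaczIter]
    | succ k ih =>
      have hre : (∑ σ : Fin (k+1) → Fin d, sqNorm (kaczIter Q 0 τs c (k+1) σ - cstar))
          = ∑ p : Fin d × (Fin k → Fin d),
              sqNorm (kaczIter Q 0 τs c (k+1) (Fin.snocEquiv (fun _ => Fin d) p) - cstar) :=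
        (Fintype.sum_equiv (Fin.snocEquiv (fun _ => Fin d))
          (fun p => sqNorm (kaczIter Q 0 τs c (k+1) (Fin.snocEquiv (fun _ => Fin d) p) - cstar))
          (fun σ => sqNorm (kaczIter Q 0 τs c (k+1) σ - cstar)) (fun p => rfl)).symm
      have hiter : ∀ p : Fin d × (Fin k → Fin d),
          kaczIter Q 0 τs c (k+1) (Fin.snocEquiv (fun _ => Fin d) p)
            = kaczStep Q 0 (τs p.1) (kaczIter Q 0 τs c k p.2) := by
        rintro ⟨l, σ'⟩
        show kaczStep Q 0 (τs ((Fin.snocEquiv (fun _ => Fin d) (l, σ')) (Fin.last k)))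
            (kaczIter Q 0 τs c k ((Fin.snocEquiv (fun _ => Fin d) (l, σ')) ∘ Fin.castSucc)) = _
        have e1 : (Fin.snocEquiv (fun _ => Fin d) (l, σ')) (Fin.last k) = l := by
          simp [Fin.snocEquiv]
        have e2 : (Fin.snocEquiv (fun _ => Fin d) (l, σ')) ∘ Fin.castSucc = σ' := by
          funext i
          simp [Fin.snocEquiv]
        rw [e1, e2]
      rw [hre]
      rw [Fintype.sum_prod_type]
      rw [Finset.sum_comm]
      have hbound : ∀ σ' : Fin k → Fin d,
          ∑ l : Fin d, sqNorm (kaczIter Q 0 τs c (k+1)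
              (Fin.snocEquiv (fun _ => Fin d) (l, σ')) - cstar)
            ≤ (d : ℝ) * ρ * sqNorm (kaczIter Q 0 τs c k σ' - cstar) := by
        intro σ'
        have hrw : ∀ l : Fin d,
            kaczIter Q 0 τs c (k+1) (Fin.snocEquiv (fun _ => Fin d) (l, σ')) - cstar
              = (kaczIter Q 0 τs c k σ' - cstar)
                - (mpinv (rowSub Q (τs l)) * rowSub Q (τs l)) *ᵥ
                  (kaczIter Q 0 τs c k σ' - cstar) := by
          intro l
          rw [hiter (l, σ')]
          exact kstep_sub Q hrow _ _ cstar hcstar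
        calc ∑ l : Fin d, sqNorm (kaczIter Q 0 τs c (k+1)
                (Fin.snocEquiv (fun _ => Fin d) (l, σ')) - cstar)
            = ∑ l : Fin d, sqNorm ((kaczIter Q 0 τs c k σ' - cstar)
                - (mpinv (rowSub Q (τs l)) * rowSub Q (τs l)) *ᵥ
                  (kaczIter Q 0 τs c k σ' - cstar)) := by
              exact Finset.sum_congr rfl fun l _ => by rw [hrw l]
          _ ≤ (d : ℝ) * ρ * sqNorm (kaczIter Q 0 τs c k σ' - cstar) := by
              have := gossip_step Q hrow hker hcov
                (kaczIter Q 0 τs c k σ' - cstar) (hinv k σ')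
              simpa [hρ, ha] using this
      calc (∑ σ' : Fin k → Fin d, ∑ l : Fin d, sqNorm (kaczIter Q 0 τs c (k+1)
              (Fin.snocEquiv (fun _ => Fin d) (l, σ')) - cstar))
          ≤ ∑ σ' : Fin k → Fin d, (d : ℝ) * ρ * sqNorm (kaczIter Q 0 τs c k σ' - cstar) :=
            Finset.sum_le_sum fun σ' _ => hbound σ'
        _ = (d : ℝ) * ρ * ∑ σ' : Fin k → Fin d, sqNorm (kaczIter Q 0 τs c k σ' - cstar) := by
            rw [← Finset.mul_sum]
        _ ≤ (d : ℝ) * ρ * (((d : ℝ) * ρ)^k * sqNorm (c - cstar)) := by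
            have hdρ : 0 ≤ (d : ℝ) * ρ := by positivity
            exact mul_le_mul_of_nonneg_left ih hdρ
        _ = ((d : ℝ) * ρ)^(k+1) * sqNorm (c - cstar) := by ring
  intro k
  have hdk : (0:ℝ) < (d : ℝ)^k := by
    have : (0:ℝ) < (d:ℝ) := by exact_mod_cast hdpos
    positivity
  rw [div_le_iff₀ hdk]
  calc (∑ σ : Fin k → Fin d, sqNorm (kaczIter Q 0 τs c k σ - cstar))
      ≤ ((d : ℝ) * ρ)^k * sqNorm (c - cstar) := hmain k
    _ = ρ^k * sqNorm (c - cstar) * (d : ℝ)^k := by rw [mul_pow]; ring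


end
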